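/- Let J(σ) = √(2(σ₀² + σ²/P)/π) − β·σ with β = √(2/(πP(P+1))), σ₀ > 0, and integer P ≥ 2. Then J'(σ) = 0 on (0,∞) if and only if σ = σ₀. -/

import Mathlib

/-- For `J(σ) = √(2(σ₀² + σ²/P)/π) − β·σ` with `β = √(2/(πP(P+1)))`, `σ₀ > 0` and
integer `P ≥ 2`, the derivative `J'(σ)` vanishes on `(0,∞)` iff `σ = σ₀`. -/
theorem stmt6 (σ₀ : ℝ) (hσ₀ : 0 < σ₀) (P : ℕ) (hP : 2 ≤ P) :
    ∀ σ > (0:ℝ),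
      deriv (fun σ' : ℝ =>
          Real.sqrt (2 * (σ₀ ^ 2 + σ' ^ 2 / P) / Real.pi)
            - Real.sqrt (2 / (Real.pi * P * (P + 1))) * σ') σ = 0
        ↔ σ = σ₀ := by
  intro σ hσ
  have hπ := Real.pi_pos
  have hPpos : (0:ℝ) < (P:ℝ) := by positivity
  have hu : (0:ℝ) < 2 * (σ₀ ^ 2 + σ ^ 2 / P) / Real.pi := by positivity
  set β : ℝ := Real.sqrt (2 / (Real.pi * P * (P + 1))) with hβdef
  set s : ℝ := Real.sqrt (2 * (σ₀ ^ 2 + σ ^ 2 / P) / Real.pi) with hsdef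
  have hs : 0 < s := Real.sqrt_pos.mpr hu
  have hs2 : s ^ 2 = 2 * (σ₀ ^ 2 + σ ^ 2 / P) / Real.pi := Real.sq_sqrt hu.le
  have hβ : 0 < β := Real.sqrt_pos.mpr (by positivity)
  have hβ2 : β ^ 2 = 2 / (Real.pi * P * (P + 1)) := Real.sq_sqrt (by positivity)
  have h1 : HasDerivAt (fun σ' : ℝ => 2 * (σ₀ ^ 2 + σ' ^ 2 / (P:ℝ)) / Real.pi)
      (2 * (((2:ℕ) * σ ^ 1) / (P:ℝ)) / Real.pi) σ := by
    exact ((((hasDerivAt_pow 2 σ).div_const (P:ℝ)).const_add (σ₀ ^ 2)).const_mul 2).div_const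
      Real.pi
  have h2 : HasDerivAt (fun σ' : ℝ => Real.sqrt (2 * (σ₀ ^ 2 + σ' ^ 2 / (P:ℝ)) / Real.pi))
      (2 * (((2:ℕ) * σ ^ 1) / (P:ℝ)) / Real.pi / (2 * s)) σ := h1.sqrt hu.ne'
  have h3 : HasDerivAt (fun σ' : ℝ =>
      Real.sqrt (2 * (σ₀ ^ 2 + σ' ^ 2 / (P:ℝ)) / Real.pi) - β * σ')
      (2 * (((2:ℕ) * σ ^ 1) / (P:ℝ)) / Real.pi / (2 * s) - β * 1) σ :=
    h2.sub ((hasDerivAt_id σ).const_mul β)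
  rw [h3.deriv]
  set A : ℝ := 2 * (((2:ℕ) * σ ^ 1) / (P:ℝ)) / Real.pi with hAdef
  have hA : 0 < A := by
    rw [hAdef]; push_cast; positivity
  constructor
  · intro h
    have heq : A = β * (2 * s) := by
      have : A / (2 * s) = β := by linarith [h]
      field_simp at this
      linarith [this]
    have hsq : A ^ 2 = β ^ 2 * (2 * s) ^ 2 := by rw [heq]; ring
    rw [hβ2] at hsq
    have hsq' : A ^ 2 = 2 / (Real.pi * P * (P + 1)) * (4 * (2 * (σ₀ ^ 2 + σ ^ 2 / P) / Real.pi)) := by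
      rw [hsq, ← hs2]; ring
    rw [hAdef] at hsq'
    push_cast at hsq'
    have hσ2 : σ ^ 2 = σ₀ ^ 2 := by
      field_simp at hsq'
      have hz : (σ ^ 2 - σ₀ ^ 2) * (16 * (P:ℝ) ^ 3 * Real.pi ^ 2) = 0 := by
        linear_combination (4 * (P:ℝ) ^ 2 * Real.pi ^ 2) * hsq'
      rcases mul_eq_zero.mp hz with h' | h'
      · linarith
      · exfalso
        have hpos : 0 < 16 * (P:ℝ) ^ 3 * Real.pi ^ 2 := by positivity
        linarith
    have : (σ - σ₀) * (σ + σ₀) = 0 := by nlinarith [hσ2]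
    rcases mul_eq_zero.mp this with h' | h'
    · linarith
    · linarith
  · intro h
    subst h
    have hsq : A ^ 2 = (β * (2 * s)) ^ 2 := by
      have : (β * (2 * s)) ^ 2 = β ^ 2 * (4 * s ^ 2) := by ring
      rw [this, hβ2, hs2, hAdef]
      push_cast
      field_simp
      ring
    have heq : A = β * (2 * s) := by
      have hB : 0 ≤ β * (2 * s) := by positivity
      calc A = Real.sqrt (A ^ 2) := (Real.sqrt_sq hA.le).symm
        _ = Real.sqrt ((β * (2 * s)) ^ 2) := by rw [hsq]
        _ = β * (2 * s) := Real.sqrt_sq hB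
    rw [heq]
    field_simp
    ring
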